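/- Let (Ω,ℱ,ℙ) be a probability space and (E_k)_{k≥1} a sequence of events. If limsup_{n→∞} (∑_{k=1}^{n} ℙ(E_k))² / (∑_{1≤i,j≤n} ℙ(E_i ∩ E_j)) > 0 and ∑_k ℙ(E_k) = ∞, then ℙ(limsup_k E_k) > 0; in fact ℙ(limsup_k E_k) ≥ limsup_{n→∞} (∑_{k=1}^{n} ℙ(E_k))² / (∑_{1≤i,j≤n} ℙ(E_i ∩ E_j)). -/

import Mathlib

open MeasureTheory Filter ENNReal Topology
-- ennreal Cauchy-Schwarz step
lemma ks_cs {Ω : Type*} [MeasurableSpace Ω] (μ : Measure Ω)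
    [IsProbabilityMeasure μ] (E : ℕ → Set Ω) (hE : ∀ k, MeasurableSet (E k))
    (F : Finset ℕ) :
    (∑ k ∈ F, μ (E k)) ^ 2 ≤ (∑ i ∈ F, ∑ j ∈ F, μ (E i ∩ E j)) * μ (⋃ k ∈ F, E k) := by
  set f : Ω → ℝ≥0∞ := fun ω => ∑ k ∈ F, (E k).indicator 1 ω with hf
  have hfm : Measurable f := by
    apply Finset.measurable_sum
    intro k _
    exact (measurable_one.indicator (hE k))
  set A : Set Ω := ⋃ k ∈ F, E k with hA
  have hAm : MeasurableSet A := MeasurableSet.biUnion F.countable_toSet (fun k _ => hE k)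
  have hgm : Measurable (A.indicator (1 : Ω → ℝ≥0∞)) := measurable_one.indicator hAm
  have hfg : f = f * A.indicator 1 := by
    funext ω
    by_cases h : ω ∈ A
    · simp [Set.indicator_of_mem h]
    · have : ∀ k ∈ F, (E k).indicator (1 : Ω → ℝ≥0∞) ω = 0 := by
        intro k hk
        apply Set.indicator_of_notMem
        exact fun hm => h (Set.mem_biUnion hk hm)
      simp [hf, Set.indicator_of_notMem h, Finset.sum_eq_zero this]
  have hint1 : ∫⁻ ω, f ω ∂μ = ∑ k ∈ F, μ (E k) := by
    rw [lintegral_finset_sum _ (fun k _ => measurable_one.indicator (hE k))]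
    simp [lintegral_indicator (hE _)]
  have hint2 : ∫⁻ ω, (f ω) ^ 2 ∂μ = ∑ i ∈ F, ∑ j ∈ F, μ (E i ∩ E j) := by
    have : ∀ ω, (f ω) ^ 2 = ∑ i ∈ F, ∑ j ∈ F, (E i ∩ E j).indicator 1 ω := by
      intro ω
      simp only [hf, sq, Finset.sum_mul_sum]
      congr 1; funext i; congr 1; funext j
      rw [Set.inter_indicator_one]
      rfl
    simp_rw [this]
    rw [lintegral_finset_sum _ (fun i _ => Finset.measurable_sum _
      (fun j _ => measurable_one.indicator ((hE i).inter (hE j))))]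
    refine Finset.sum_congr rfl fun i _ => ?_
    rw [lintegral_finset_sum _ (fun j _ => measurable_one.indicator ((hE i).inter (hE j)))]
    simp [lintegral_indicator ((hE _).inter (hE _))]
  have hcs := ENNReal.lintegral_mul_le_Lp_mul_Lq μ (show Real.HolderConjugate 2 2 by rw [Real.holderConjugate_iff]; norm_num)
    hfm.aemeasurable hgm.aemeasurable

  have hg2 : ∀ ω, A.indicator (1 : Ω → ℝ≥0∞) ω ^ (2:ℝ) = A.indicator 1 ω := by
    intro ω
    by_cases h : ω ∈ A <;> simp [Set.indicator_of_mem, Set.indicator_of_notMem, h]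
  have hgint : ∫⁻ ω, A.indicator (1 : Ω → ℝ≥0∞) ω ^ (2:ℝ) ∂μ = μ A := by
    simp_rw [hg2]
    rw [lintegral_indicator hAm]; simp
  have hf2 : ∀ ω, f ω ^ (2:ℝ) = f ω ^ (2:ℕ) := by
    intro ω; rw [← ENNReal.rpow_natCast]; norm_num
  rw [← hint1, ← hint2]
  calc (∫⁻ ω, f ω ∂μ) ^ 2 = (∫⁻ ω, (f * A.indicator 1 : Ω → ℝ≥0∞) ω ∂μ) ^ 2 := by rw [← hfg]
    _ ≤ ((∫⁻ ω, f ω ^ (2:ℝ) ∂μ) ^ ((1:ℝ)/2) * (∫⁻ ω, A.indicator (1:Ω→ℝ≥0∞) ω ^ (2:ℝ) ∂μ) ^ ((1:ℝ)/2)) ^ 2 :=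
        pow_le_pow_left' hcs 2
    _ = (∫⁻ ω, f ω ^ (2:ℝ) ∂μ) * μ A := by
        rw [hgint, ← ENNReal.rpow_natCast, ENNReal.mul_rpow_of_nonneg _ _ (by norm_num),
          ← ENNReal.rpow_mul, ← ENNReal.rpow_mul]
        norm_num
    _ = (∫⁻ ω, f ω ^ (2:ℕ) ∂μ) * μ A := by simp_rw [hf2]

lemma ks_key {Ω : Type*} [MeasurableSpace Ω] (μ : Measure Ω)
    [IsProbabilityMeasure μ] (E : ℕ → Set Ω) (hE : ∀ k, MeasurableSet (E k))
    (F : Finset ℕ) :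
    (∑ k ∈ F, (μ (E k)).toReal) ^ 2 / (∑ i ∈ F, ∑ j ∈ F, (μ (E i ∩ E j)).toReal)
      ≤ (μ (⋃ k ∈ F, E k)).toReal := by
  have h := ks_cs μ E hE F
  have hne : (∑ i ∈ F, ∑ j ∈ F, μ (E i ∩ E j)) ≠ ⊤ :=
    (ENNReal.sum_lt_top.2 fun i _ => (ENNReal.sum_lt_top.2 fun j _ => measure_lt_top μ _)).ne
  have hAne : μ (⋃ k ∈ F, E k) ≠ ⊤ := measure_ne_top μ _
  have hr : (∑ k ∈ F, (μ (E k)).toReal) ^ 2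
      ≤ (∑ i ∈ F, ∑ j ∈ F, (μ (E i ∩ E j)).toReal) * (μ (⋃ k ∈ F, E k)).toReal := by
    have := ENNReal.toReal_mono (by exact ENNReal.mul_ne_top hne hAne) h
    rw [ENNReal.toReal_mul, ENNReal.toReal_pow, ENNReal.toReal_sum
      (fun k _ => measure_ne_top μ _)] at this
    rw [ENNReal.toReal_sum (fun i _ => (ENNReal.sum_lt_top.2
      (fun j _ => measure_lt_top μ _)).ne)] at this
    simp_rw [ENNReal.toReal_sum (fun j _ => measure_ne_top μ _)] at this
    exact this
  set T := ∑ i ∈ F, ∑ j ∈ F, (μ (E i ∩ E j)).toReal with hT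
  rcases eq_or_lt_of_le (show (0:ℝ) ≤ T from Finset.sum_nonneg fun i _ =>
    Finset.sum_nonneg fun j _ => ENNReal.toReal_nonneg) with h0 | h0
  · rw [← h0, _root_.div_zero]; exact ENNReal.toReal_nonneg
  · rw [div_le_iff₀ h0, mul_comm]; exact hr

/-- Kochen–Stone version of the second Borel–Cantelli lemma. -/
theorem stmt2 {Ω : Type*} [MeasurableSpace Ω] (μ : Measure Ω)
    [IsProbabilityMeasure μ] (E : ℕ → Set Ω) (hE : ∀ k, MeasurableSet (E k))
    (hdiv : ∑' k, μ (E k) = ⊤) (L : ℝ)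
    (hL : L = limsup (fun n => (∑ k ∈ Finset.range n, (μ (E k)).toReal) ^ 2 /
        (∑ i ∈ Finset.range n, ∑ j ∈ Finset.range n, (μ (E i ∩ E j)).toReal)) atTop)
    (hpos : 0 < L) :
    0 < (μ (⋂ n, ⋃ k, ⋃ _ : n ≤ k, E k)).toReal ∧
      L ≤ (μ (⋂ n, ⋃ k, ⋃ _ : n ≤ k, E k)).toReal := by
  classical
  set a : ℕ → ℝ := fun k => (μ (E k)).toReal with ha_def
  set s : ℕ → ℝ := fun n => ∑ k ∈ Finset.range n, a k with hs_def
  set t : ℕ → ℝ := fun n => ∑ i ∈ Finset.range n, ∑ j ∈ Finset.range n,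
    (μ (E i ∩ E j)).toReal with ht_def
  set c : ℕ → ℝ := fun n => s n ^ 2 / t n with hc_def
  have hLc : L = limsup c atTop := hL
  have ha0 : ∀ k, 0 ≤ a k := fun k => ENNReal.toReal_nonneg
  have hs0 : ∀ n, 0 ≤ s n := fun n => Finset.sum_nonneg fun k _ => ha0 k
  have ht0 : ∀ n, 0 ≤ t n := fun n => Finset.sum_nonneg fun i _ =>
    Finset.sum_nonneg fun j _ => ENNReal.toReal_nonneg
  have hc0 : ∀ n, 0 ≤ c n := fun n => div_nonneg (sq_nonneg _) (ht0 n)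
  have hs_mono : Monotone s := fun m n hmn => Finset.sum_le_sum_of_subset_of_nonneg
    (Finset.range_subset_range.2 hmn) (fun k _ _ => ha0 k)
  have hts : ∀ n, s n ≤ t n := by
    intro n
    apply Finset.sum_le_sum
    intro i hi
    calc a i = (μ (E i ∩ E i)).toReal := by simp [ha_def]
      _ ≤ ∑ j ∈ Finset.range n, (μ (E i ∩ E j)).toReal :=
          Finset.single_le_sum (f := fun j => (μ (E i ∩ E j)).toReal) (fun j _ => ENNReal.toReal_nonneg) hi
  have hc1 : ∀ n, c n ≤ 1 := by
    intro n
    have h : c n ≤ (μ (⋃ k ∈ Finset.range n, E k)).toReal := ks_key μ E hE (Finset.range n)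
    exact h.trans ((ENNReal.toReal_mono ENNReal.one_ne_top prob_le_one).trans (by simp))
  have hst2 : ∀ n, s n ^ 2 ≤ t n := by
    intro n
    rcases lt_or_ge 0 (t n) with h | h
    · have := hc1 n
      rw [hc_def] at this
      simp only at this
      rwa [div_le_one h] at this
    · have ht0' : t n = 0 := le_antisymm h (ht0 n)
      have hs0' : s n = 0 := le_antisymm (ht0' ▸ hts n) (hs0 n)
      rw [hs0', ht0']; norm_num
  have hL1 : L ≤ 1 := by
    rw [hLc]
    exact limsup_le_of_le (isBoundedUnder_of (u := c) ⟨0, fun n => hc0 n⟩).isCoboundedUnder_le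
      (Eventually.of_forall hc1)
  have hs_tend : Tendsto s atTop atTop := by
    have hP : Tendsto (fun n => ∑ k ∈ Finset.range n, μ (E k)) atTop (𝓝 (∑' k, μ (E k))) :=
      ENNReal.tendsto_nat_tsum _
    rw [hdiv] at hP
    rw [tendsto_atTop]
    intro b
    filter_upwards [hP.eventually (eventually_gt_nhds (ENNReal.ofReal_lt_top (r := b)))] with n hn
    have hfin : (∑ k ∈ Finset.range n, μ (E k)) ≠ ⊤ :=
      (ENNReal.sum_lt_top.2 fun k _ => measure_lt_top μ _).ne
    have hsn : s n = (∑ k ∈ Finset.range n, μ (E k)).toReal :=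
      (ENNReal.toReal_sum fun k _ => measure_ne_top μ _).symm
    rcases le_or_gt b 0 with hb | hb
    · exact hb.trans (hs0 n)
    · calc b = (ENNReal.ofReal b).toReal := (ENNReal.toReal_ofReal hb.le).symm
        _ ≤ (∑ k ∈ Finset.range n, μ (E k)).toReal := ENNReal.toReal_mono hfin hn.le
        _ = s n := hsn.symm
  set A : ℕ → Set Ω := fun m => ⋃ k, ⋃ _ : m ≤ k, E k with hA_def
  have hA_meas : ∀ m, MeasurableSet (A m) := fun m =>
    MeasurableSet.iUnion fun k => MeasurableSet.iUnion fun _ => hE k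
  have hA_anti : Antitone A := by
    intro m m' hmm'
    refine Set.iUnion_subset fun k => Set.iUnion_subset fun hk => ?_
    exact Set.subset_iUnion₂ (s := fun k _ => E k) k (hmm'.trans hk)
  have hmain : ∀ m, L ≤ (μ (A m)).toReal := by
    intro m
    refine le_of_forall_pos_le_add fun ε hε => ?_
    have hfreq : ∃ᶠ n in atTop, L - ε / 2 < c n := by
      apply frequently_lt_of_lt_limsup
        ((isBoundedUnder_of (u := c) ⟨0, fun n => hc0 n⟩).isCoboundedUnder_le)
      rw [← hLc]; linarith
    have hev : ∀ᶠ n in atTop, (1 ≤ s n ∧ 4 * s m ≤ ε * s n) ∧ m ≤ n := by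
      filter_upwards [hs_tend.eventually_ge_atTop 1,
        hs_tend.eventually_ge_atTop (4 * s m / ε), eventually_ge_atTop m] with n h1 h2 h3
      refine ⟨⟨h1, ?_⟩, h3⟩
      rw [div_le_iff₀ hε] at h2
      linarith [mul_comm (s n) ε]
    obtain ⟨n, hcn', ⟨⟨hsn1, hsm⟩, hmn⟩⟩ := (hfreq.and_eventually hev).exists
    have hcn : L - ε / 2 < s n ^ 2 / t n := hcn'
    have hsub : (⋃ k ∈ Finset.Ico m n, E k) ⊆ A m := by
      refine Set.iUnion₂_subset fun k hk => ?_
      exact Set.subset_iUnion₂ (s := fun k _ => E k) k (Finset.mem_Ico.1 hk).1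
    have hmono : (μ (⋃ k ∈ Finset.Ico m n, E k)).toReal ≤ (μ (A m)).toReal :=
      ENNReal.toReal_mono (measure_ne_top μ _) (measure_mono hsub)
    set T' := ∑ i ∈ Finset.Ico m n, ∑ j ∈ Finset.Ico m n, (μ (E i ∩ E j)).toReal with hT'
    have hsum_Ico : ∑ k ∈ Finset.Ico m n, a k = s n - s m := Finset.sum_Ico_eq_sub a hmn
    have hkey : (∑ k ∈ Finset.Ico m n, a k) ^ 2 / T' ≤
        (μ (⋃ k ∈ Finset.Ico m n, E k)).toReal := ks_key μ E hE (Finset.Ico m n)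
    rw [hsum_Ico] at hkey
    have hT'0 : 0 ≤ T' := Finset.sum_nonneg fun i _ =>
      Finset.sum_nonneg fun j _ => ENNReal.toReal_nonneg
    have hT'le : T' ≤ t n := by
      calc T' ≤ ∑ i ∈ Finset.Ico m n, ∑ j ∈ Finset.range n, (μ (E i ∩ E j)).toReal :=
            Finset.sum_le_sum fun i _ => Finset.sum_le_sum_of_subset_of_nonneg
              (fun j hj => Finset.mem_range.2 (Finset.mem_Ico.1 hj).2)
              (fun j _ _ => ENNReal.toReal_nonneg)
        _ ≤ t n := Finset.sum_le_sum_of_subset_of_nonneg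
              (fun i hi => Finset.mem_range.2 (Finset.mem_Ico.1 hi).2)
              (fun i _ _ => Finset.sum_nonneg fun j _ => ENNReal.toReal_nonneg)
    have hT'diag : s n - s m ≤ T' := by
      rw [← hsum_Ico]
      apply Finset.sum_le_sum
      intro i hi
      calc a i = (μ (E i ∩ E i)).toReal := by simp [ha_def]
        _ ≤ ∑ j ∈ Finset.Ico m n, (μ (E i ∩ E j)).toReal :=
            Finset.single_le_sum (f := fun j => (μ (E i ∩ E j)).toReal) (fun j _ => ENNReal.toReal_nonneg) hi
    have hsmn : s m ≤ s n := hs_mono hmn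
    have hsn_pos : (0:ℝ) < s n := lt_of_lt_of_le one_pos hsn1
    have htn_pos : (0:ℝ) < t n := lt_of_lt_of_le (by nlinarith) (hst2 n)
    rcases lt_or_ge 0 T' with hT'pos | hT'np
    · have h1 : (s n - s m) ^ 2 / t n ≤ (s n - s m) ^ 2 / T' :=
        div_le_div_of_nonneg_left (sq_nonneg _) hT'pos hT'le
      have h2 : (L - ε / 2) * t n < s n ^ 2 := (lt_div_iff₀ htn_pos).1 hcn
      have h4 : s n ^ 2 ≤ t n := hst2 n
      have h5 : (L - ε) * t n ≤ (s n - s m) ^ 2 := by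
        nlinarith [mul_le_mul_of_nonneg_right hsm hsn_pos.le, sq_nonneg (s m),
          mul_le_mul_of_nonneg_left h4 (half_pos hε).le]
      have h6 : L - ε ≤ (s n - s m) ^ 2 / t n := (le_div_iff₀ htn_pos).2 h5
      linarith [h6.trans (h1.trans (hkey.trans hmono))]
    · have hT'eq : T' = 0 := le_antisymm hT'np hT'0
      have hnm : s n = s m := le_antisymm (by linarith [hT'diag, hT'eq]) hsmn
      have hε4 : 4 ≤ ε := by nlinarith
      linarith [ENNReal.toReal_nonneg (a := μ (A m))]
  have hlim := tendsto_measure_iInter_atTop (fun m => (hA_meas m).nullMeasurableSet)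
    hA_anti ⟨0, measure_ne_top μ _⟩
  have hI : ENNReal.ofReal L ≤ μ (⋂ m, A m) := by
    refine ge_of_tendsto hlim (Eventually.of_forall fun m => ?_)
    calc ENNReal.ofReal L ≤ ENNReal.ofReal (μ (A m)).toReal :=
          ENNReal.ofReal_le_ofReal (hmain m)
      _ = μ (A m) := ENNReal.ofReal_toReal (measure_ne_top μ _)
  have hLle : L ≤ (μ (⋂ m, A m)).toReal := by
    have h := ENNReal.toReal_mono (measure_ne_top μ _) hI
    rwa [ENNReal.toReal_ofReal hpos.le] at h
  exact ⟨lt_of_lt_of_le hpos hLle, hLle⟩
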